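/- arXiv:2310.02261 — 3 statements merged into one kernel-verified Lean document; each statement's English description precedes it below -/
import Mathlib

section
/- Let $\delta \in (0,1]$ and let $f:[0,\infty)\to[0,\infty)$ be non-increasing, and let $a_0 \ge 0$ and $a_1,\dots,a_T \ge 0$. Fix $i \in \{0,\dots,T\}$. Then $\sum_{t=i+1}^{T} \left(\sum_{s=t-i}^{t} a_s\right) f\left(\sum_{r=0}^{t} a_r\right) \le (i+1)\int_{\sum_{r=0}^{0} a_r}^{\sum_{r=0}^{T} a_r} f(x)\,dx$. -/
/-- Inner step of Lemma 4: for fixed lag `i`, the weighted sum over `t` is bounded by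
`(i+1)` times the integral of `f`. -/
theorem stmt_1 (T : ℕ) (δ : ℝ) (hδ : δ ∈ Set.Ioc (0:ℝ) 1) (f : ℝ → ℝ)
    (hf_nonneg : ∀ x, 0 ≤ x → 0 ≤ f x) (hf_anti : AntitoneOn f (Set.Ici 0))
    (a : ℕ → ℝ) (ha : ∀ t, 0 ≤ a t) (i : ℕ) (hi : i ≤ T) :
    ∑ t ∈ Finset.Icc (i + 1) T,
        (∑ s ∈ Finset.Icc (t - i) t, a s) * f (∑ r ∈ Finset.range (t + 1), a r)
      ≤ ((i : ℝ) + 1) * ∫ x in (∑ r ∈ Finset.range 1, a r)..(∑ r ∈ Finset.range (T + 1), a r), f x := by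
  set S : ℕ → ℝ := fun n => ∑ r ∈ Finset.range (n + 1), a r with hSdef
  have hS0 : ∀ n, 0 ≤ S n := fun n => Finset.sum_nonneg fun _ _ => ha _
  have hSsucc : ∀ n, S (n + 1) = S n + a (n + 1) := fun n => Finset.sum_range_succ a (n + 1)
  have hSmono : Monotone S := monotone_nat_of_le_succ fun n => by
    rw [hSsucc]; linarith [ha (n + 1)]
  have hint : ∀ c d : ℝ, 0 ≤ c → 0 ≤ d → IntervalIntegrable f MeasureTheory.volume c d := by
    intro c d hc hd
    exact (hf_anti.mono (fun x hx => le_trans (le_inf hc hd) hx.1)).intervalIntegrable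
  -- key per-term bound
  have key : ∀ s t : ℕ, 1 ≤ s → s ≤ t →
      a s * f (S t) ≤ ∫ x in (S (s - 1))..(S s), f x := by
    intro s t hs hst
    have hseq : S s = S (s - 1) + a s := by
      conv_lhs => rw [show s = (s - 1) + 1 by omega]
      rw [hSsucc, show s - 1 + 1 = s by omega]
    have h1 : S (s - 1) ≤ S s := hSmono (by omega)
    have h2 : S s ≤ S t := hSmono hst
    have hc : ∀ x ∈ Set.Icc (S (s - 1)) (S s), f (S t) ≤ f x := by
      intro x hx
      exact hf_anti (le_trans (hS0 (s - 1)) hx.1) (le_trans (hS0 (s - 1)) h1 |>.trans h2 : (0:ℝ) ≤ S t) (le_trans hx.2 h2)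
    calc a s * f (S t) = ∫ _ in (S (s - 1))..(S s), f (S t) := by
          rw [intervalIntegral.integral_const, smul_eq_mul, hseq]; ring
      _ ≤ ∫ x in (S (s - 1))..(S s), f x := by
          apply intervalIntegral.integral_mono_on h1 intervalIntegrable_const
            (hint _ _ (hS0 _) (hS0 _)) hc
  -- chain bound for fixed offset τ
  have chain : ∀ τ : ℕ, τ ≤ i →
      ∑ t ∈ Finset.Icc (i + 1) T, a (t - τ) * f (S t) ≤ ∫ x in (S 0)..(S T), f x := by
    intro τ hτ
    have step1 : ∑ t ∈ Finset.Icc (i + 1) T, a (t - τ) * f (S t)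
        ≤ ∑ t ∈ Finset.Icc (i + 1) T, ∫ x in (S (t - τ - 1))..(S (t - τ)), f x := by
      apply Finset.sum_le_sum
      intro t ht
      rw [Finset.mem_Icc] at ht
      exact key (t - τ) t (by omega) (by omega)
    have step2 : ∑ t ∈ Finset.Icc (i + 1) T, (∫ x in (S (t - τ - 1))..(S (t - τ)), f x)
        = ∫ x in (S (i - τ))..(S (T - τ)), f x := by
      rw [show Finset.Icc (i + 1) T = Finset.Ico (i + 1) (T + 1) by rw [Finset.Ico_add_one_right_eq_Icc],
        Finset.sum_Ico_eq_sum_range]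
      have hre : ∀ k ∈ Finset.range (T + 1 - (i + 1)),
          (∫ x in S (i + 1 + k - τ - 1)..S (i + 1 + k - τ), f x)
          = ∫ x in (S (i - τ + k))..(S (i - τ + (k + 1))), f x := by
        intro k _
        have e1 : i + 1 + k - τ - 1 = i - τ + k := by omega
        have e2 : i + 1 + k - τ = i - τ + (k + 1) := by omega
        rw [e1, e2]
      rw [Finset.sum_congr rfl hre]
      have := intervalIntegral.sum_integral_adjacent_intervals
        (a := fun k => S (i - τ + k)) (n := T + 1 - (i + 1))
        (fun k _ => hint _ _ (hS0 _) (hS0 _))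
      rw [this, show i - τ + 0 = i - τ by omega, show i - τ + (T + 1 - (i + 1)) = T - τ by omega]
    have step3 : (∫ x in (S (i - τ))..(S (T - τ)), f x) ≤ ∫ x in (S 0)..(S T), f x := by
      have h01 : S 0 ≤ S (i - τ) := hSmono (Nat.zero_le _)
      have h12 : S (i - τ) ≤ S (T - τ) := hSmono (by omega)
      have h23 : S (T - τ) ≤ S T := hSmono (by omega)
      have e1 : (∫ x in (S 0)..(S (i - τ)), f x) + (∫ x in (S (i - τ))..(S (T - τ)), f x)
          + (∫ x in (S (T - τ))..(S T), f x) = ∫ x in (S 0)..(S T), f x := by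
        rw [intervalIntegral.integral_add_adjacent_intervals (hint _ _ (hS0 _) (hS0 _))
          (hint _ _ (hS0 _) (hS0 _)),
          intervalIntegral.integral_add_adjacent_intervals (hint _ _ (hS0 _) (hS0 _))
          (hint _ _ (hS0 _) (hS0 _))]
      have n1 : 0 ≤ ∫ x in (S 0)..(S (i - τ)), f x :=
        intervalIntegral.integral_nonneg h01 fun x hx => hf_nonneg x (le_trans (hS0 0) hx.1)
      have n2 : 0 ≤ ∫ x in (S (T - τ))..(S T), f x :=
        intervalIntegral.integral_nonneg h23 fun x hx => hf_nonneg x (le_trans (hS0 _) hx.1)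
      linarith
    calc _ ≤ _ := step1
      _ = _ := step2
      _ ≤ _ := step3
  -- rewrite LHS as double sum over offsets
  have lhs_eq : ∑ t ∈ Finset.Icc (i + 1) T,
      (∑ s ∈ Finset.Icc (t - i) t, a s) * f (S t)
      = ∑ τ ∈ Finset.range (i + 1), ∑ t ∈ Finset.Icc (i + 1) T, a (t - τ) * f (S t) := by
    rw [Finset.sum_comm]
    apply Finset.sum_congr rfl
    intro t ht
    rw [Finset.mem_Icc] at ht
    rw [← Finset.sum_mul]
    congr 1
    rw [show Finset.Icc (t - i) t = Finset.Ico (t - i) (t + 1) by rw [Finset.Ico_add_one_right_eq_Icc],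
      Finset.sum_Ico_eq_sum_range, show t + 1 - (t - i) = i + 1 by omega]
    rw [← Finset.sum_range_reflect]
    apply Finset.sum_congr rfl
    intro k hk
    rw [Finset.mem_range] at hk
    congr 1
    omega
  have h0 : S 0 = ∑ r ∈ Finset.range 1, a r := rfl
  calc ∑ t ∈ Finset.Icc (i + 1) T,
      (∑ s ∈ Finset.Icc (t - i) t, a s) * f (∑ r ∈ Finset.range (t + 1), a r)
      = ∑ τ ∈ Finset.range (i + 1), ∑ t ∈ Finset.Icc (i + 1) T, a (t - τ) * f (S t) := lhs_eq
    _ ≤ ∑ τ ∈ Finset.range (i + 1), ∫ x in (S 0)..(S T), f x := by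
        apply Finset.sum_le_sum
        intro τ hτ
        have := Finset.mem_range.mp hτ
        exact chain τ (by omega)
    _ = ((i : ℝ) + 1) * ∫ x in (S 0)..(S T), f x := by
        rw [Finset.sum_const, Finset.card_range, nsmul_eq_mul]
        push_cast
        ring
    _ = _ := by rw [h0]
end

section
/- Let $K \in \mathbb{R}^{d_u \times d_x}$ with $\|K\| \le \kappa^{\mathbb{L}}$, suppose $\|(A+BK)^j\| \le \sqrt{d_x}(1-\delta)^j$ for all $j \ge 0$, and $\|w_s\| \le w$ for all $s$. Define the DAC matrices $M^{[j+1]} = K(A+BK)^j$ for $0 \le j \le p-1$. Then for every $t$, the linear-policy action $u_t^{\mathbb{L}} = \sum_{j=0}^{t-1} K(A+BK)^j w_{t-j}$ and the DAC action $u_t = \sum_{j=0}^{p-1} M^{[j+1]} w_{t-j}$ satisfy $\|u_t - u_t^{\mathbb{L}}\| \le \sqrt{d_x}\,\kappa^{\mathbb{L}}\, \frac{w}{\delta} e^{-\delta p}$. -/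
lemma geom_tail_le (r δ : ℝ) (hr0 : 0 ≤ r) (hrδ : r = 1 - δ) (hδ : 0 < δ) (p t : ℕ) :
    ∑ j ∈ Finset.Ico p t, r ^ j ≤ r ^ p / δ := by
  have hr1 : r ≠ 1 := by rw [hrδ]; intro h; linarith
  rw [Finset.sum_Ico_eq_sum_range]
  have : ∑ i ∈ Finset.range (t - p), r ^ (p + i)
      = r ^ p * ∑ i ∈ Finset.range (t - p), r ^ i := by
    rw [Finset.mul_sum]; congr 1; ext i; rw [pow_add]
  rw [this]
  have hgeo : ∑ i ∈ Finset.range (t - p), r ^ i ≤ 1 / δ := by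
    have hm := geom_sum_mul r (t - p)
    have hrn : 0 ≤ r ^ (t - p) := pow_nonneg hr0 _
    rw [le_div_iff₀ hδ]
    nlinarith
  calc r ^ p * ∑ i ∈ Finset.range (t - p), r ^ i ≤ r ^ p * (1 / δ) := by
        exact mul_le_mul_of_nonneg_left hgeo (pow_nonneg hr0 _)
    _ = r ^ p / δ := by ring

/-- DAC approximation of a linear policy: truncation error bound. -/
theorem stmt_9 (dx du p : ℕ) (δ κ wb : ℝ) (hδ : δ ∈ Set.Ioo (0:ℝ) 1)
    (A : EuclideanSpace ℝ (Fin dx) →L[ℝ] EuclideanSpace ℝ (Fin dx))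
    (B : EuclideanSpace ℝ (Fin du) →L[ℝ] EuclideanSpace ℝ (Fin dx))
    (K : EuclideanSpace ℝ (Fin dx) →L[ℝ] EuclideanSpace ℝ (Fin du))
    (hK : ‖K‖ ≤ κ)
    (hL : ∀ j : ℕ, ‖(A + B.comp K) ^ j‖ ≤ Real.sqrt dx * (1 - δ) ^ j)
    (w : ℤ → EuclideanSpace ℝ (Fin dx))
    (hw : ∀ s : ℤ, ‖w s‖ ≤ wb) (hw0 : ∀ s : ℤ, s ≤ 0 → w s = 0)
    (uL u : ℕ → EuclideanSpace ℝ (Fin du))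
    (huL : ∀ t : ℕ, uL t = ∑ j ∈ Finset.range t,
      (K.comp ((A + B.comp K) ^ j)) (w ((t : ℤ) - j)))
    (hu : ∀ t : ℕ, u t = ∑ j ∈ Finset.range p,
      (K.comp ((A + B.comp K) ^ j)) (w ((t : ℤ) - j))) :
    ∀ t : ℕ, ‖u t - uL t‖ ≤ Real.sqrt dx * κ * wb / δ * Real.exp (-δ * p) := by
  obtain ⟨hδ0, hδ1⟩ := hδ
  have hκ0 : 0 ≤ κ := le_trans (norm_nonneg K) hK
  have hwb0 : 0 ≤ wb := le_trans (norm_nonneg (w 1)) (hw 1)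
  have hsd : 0 ≤ Real.sqrt dx := Real.sqrt_nonneg _
  have hr0 : (0:ℝ) ≤ 1 - δ := by linarith
  have hRHS0 : 0 ≤ Real.sqrt dx * κ * wb / δ * Real.exp (-δ * p) :=
    mul_nonneg (div_nonneg (mul_nonneg (mul_nonneg hsd hκ0) hwb0) hδ0.le)
      (Real.exp_pos _).le
  intro t
  set f : ℕ → EuclideanSpace ℝ (Fin du) :=
    fun j => (K.comp ((A + B.comp K) ^ j)) (w ((t : ℤ) - j)) with hf
  have hfb : ∀ j : ℕ, ‖f j‖ ≤ Real.sqrt dx * κ * wb * (1 - δ) ^ j := by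
    intro j
    calc ‖f j‖ ≤ ‖K.comp ((A + B.comp K) ^ j)‖ * ‖w ((t : ℤ) - j)‖ :=
          ContinuousLinearMap.le_opNorm _ _
      _ ≤ (‖K‖ * ‖(A + B.comp K) ^ j‖) * wb := by
          apply mul_le_mul (ContinuousLinearMap.opNorm_comp_le _ _) (hw _)
            (norm_nonneg _) (mul_nonneg (norm_nonneg _) (norm_nonneg _))
      _ ≤ (κ * (Real.sqrt dx * (1 - δ) ^ j)) * wb := by
          apply mul_le_mul_of_nonneg_right _ hwb0
          exact mul_le_mul hK (hL j) (norm_nonneg _) hκ0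
      _ = Real.sqrt dx * κ * wb * (1 - δ) ^ j := by ring
  have hexp : (1 - δ) ^ p ≤ Real.exp (-δ * p) := by
    have h1 : (1 - δ) ≤ Real.exp (-δ) := by
      have := Real.add_one_le_exp (-δ); linarith
    calc (1 - δ) ^ p ≤ Real.exp (-δ) ^ p := pow_le_pow_left₀ hr0 h1 p
      _ = Real.exp (-δ * p) := by
          rw [← Real.exp_nat_mul]; ring_nf
  rcases le_or_gt t p with htp | htp
  · -- extra terms vanish
    have hsplit : ∑ j ∈ Finset.range p, f j
        = ∑ j ∈ Finset.range t, f j + ∑ j ∈ Finset.Ico t p, f j := by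
      rw [Finset.range_eq_Ico, Finset.range_eq_Ico]
      exact (Finset.sum_Ico_consecutive _ (Nat.zero_le t) htp).symm
    have hzero : ∑ j ∈ Finset.Ico t p, f j = 0 := by
      apply Finset.sum_eq_zero
      intro j hj
      simp only [Finset.mem_Ico] at hj
      have : ((t : ℤ) - j) ≤ 0 := by
        have : (t : ℤ) ≤ j := by exact_mod_cast hj.1
        linarith
      simp only [hf, hw0 _ this, map_zero]
    rw [hu, huL, ← hf, hsplit, hzero]
    simpa using hRHS0
  · have hsplit : ∑ j ∈ Finset.range t, f j
        = ∑ j ∈ Finset.range p, f j + ∑ j ∈ Finset.Ico p t, f j := by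
      rw [Finset.range_eq_Ico, Finset.range_eq_Ico]
      exact (Finset.sum_Ico_consecutive _ (Nat.zero_le p) htp.le).symm
    rw [hu, huL, ← hf, hsplit]
    rw [show (∑ j ∈ Finset.range p, f j)
        - (∑ j ∈ Finset.range p, f j + ∑ j ∈ Finset.Ico p t, f j)
        = -(∑ j ∈ Finset.Ico p t, f j) by abel]
    rw [norm_neg]
    calc ‖∑ j ∈ Finset.Ico p t, f j‖ ≤ ∑ j ∈ Finset.Ico p t, ‖f j‖ :=
          norm_sum_le _ _
      _ ≤ ∑ j ∈ Finset.Ico p t, Real.sqrt dx * κ * wb * (1 - δ) ^ j :=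
          Finset.sum_le_sum fun j _ => hfb j
      _ = Real.sqrt dx * κ * wb * ∑ j ∈ Finset.Ico p t, (1 - δ) ^ j := by
          rw [Finset.mul_sum]
      _ ≤ Real.sqrt dx * κ * wb * ((1 - δ) ^ p / δ) := by
          apply mul_le_mul_of_nonneg_left
            (geom_tail_le (1 - δ) δ hr0 rfl hδ0 p t)
            (mul_nonneg (mul_nonneg hsd hκ0) hwb0)
      _ ≤ Real.sqrt dx * κ * wb * (Real.exp (-δ * p) / δ) := by
          gcongr
      _ = Real.sqrt dx * κ * wb / δ * Real.exp (-δ * p) := by ring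
end

section
/- Let $\phi_1$ be a convex function on a convex set with minimizer $q_1$, and let $\phi_2 = \phi_1 + \psi$ where $\phi_2$ is $1$-strongly convex with respect to a norm $\|\cdot\|$ and has minimizer $q_2$, with $\psi$ convex and differentiable. Then $\|q_1 - q_2\| \le \|\nabla\psi(q_1)\|_*$, where $\|\cdot\|_*$ is the dual norm. -/
open Filter Topology

/-- FTRL stability lemma (McMahan, Lemma 7): the minimizers of `φ₁` and `φ₂ = φ₁ + ψ`
are within the dual norm of `∇ψ(q₁)`. -/
theorem stmt_12 {E : Type*} [NormedAddCommGroup E] [NormedSpace ℝ E]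
    (φ₁ ψ : E → ℝ) (q₁ q₂ : E)
    (hφ₁ : ConvexOn ℝ Set.univ φ₁)
    (hψconv : ConvexOn ℝ Set.univ ψ) (hψdiff : Differentiable ℝ ψ)
    (hsc : StrongConvexOn Set.univ 1 (fun x => φ₁ x + ψ x))
    (hq₁ : ∀ x, φ₁ q₁ ≤ φ₁ x)
    (hq₂ : ∀ x, φ₁ q₂ + ψ q₂ ≤ φ₁ x + ψ x) :
    ‖q₁ - q₂‖ ≤ ‖fderiv ℝ ψ q₁‖ := by
  set g := fderiv ℝ ψ q₁ with hg
  set d := ‖q₁ - q₂‖ with hd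
  set v := q₂ - q₁ with hv
  set A := φ₁ q₁ + ψ q₁ with hA
  set B := φ₁ q₂ + ψ q₂ with hB
  have hIoo : Set.Ioo (0:ℝ) 1 ∈ 𝓝[>] (0:ℝ) :=
    Ioo_mem_nhdsGT_of_mem (by constructor <;> norm_num)
  -- Step A : d^2/2 ≤ A - B
  have stepA : 1/2 * d^2 ≤ A - B := by
    have key : ∀ t ∈ Set.Ioo (0:ℝ) 1, (1 - t) * (1/2 * d^2) ≤ A - B := by
      intro t ht
      have h := hsc.2 (Set.mem_univ q₁) (Set.mem_univ q₂) ht.1.le (by linarith [ht.2])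
        (by ring : t + (1 - t) = 1)
      have h2 := hq₂ (t • q₁ + (1 - t) • q₂)
      simp only [smul_eq_mul] at h
      have ht0 : (0:ℝ) < t := ht.1
      nlinarith [h, h2]
    have htend : Tendsto (fun t : ℝ => (1 - t) * (1/2 * d^2)) (𝓝[>] 0)
        (𝓝 (1/2 * d^2)) := by
      have : Tendsto (fun t : ℝ => (1 - t) * (1/2 * d^2)) (𝓝 0) (𝓝 ((1 - 0) * (1/2 * d^2))) :=
        (((continuous_const.sub continuous_id).mul continuous_const).tendsto 0)
      simpa using this.mono_left nhdsWithin_le_nhds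
    refine le_of_tendsto htend ?_
    filter_upwards [hIoo] with t ht using key t ht
  -- Step B : g v ≤ B - A - d^2/2
  have stepB : g v ≤ B - A - 1/2 * d^2 := by
    -- directional derivative
    have hline : HasDerivAt (fun t : ℝ => ψ (q₁ + t • v)) (g v) 0 := by
      have hinner : HasDerivAt (fun t : ℝ => q₁ + t • v) v 0 := by
        simpa using ((hasDerivAt_id (0:ℝ)).smul_const v).const_add q₁
      have houter : HasFDerivAt ψ g (q₁ + (0:ℝ) • v) := by
        simpa using (hψdiff q₁).hasFDerivAt
      exact houter.comp_hasDerivAt 0 hinner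
    have hslope : Tendsto (fun t : ℝ => (ψ (q₁ + t • v) - ψ q₁) / t) (𝓝[>] 0) (𝓝 (g v)) := by
      have := hasDerivAt_iff_tendsto_slope.1 hline
      have h2 := this.mono_left (nhdsWithin_mono 0 (fun x hx => ne_of_gt hx))
      refine h2.congr' ?_
      filter_upwards [self_mem_nhdsWithin] with t ht
      simp [slope_def_field, div_eq_inv_mul]
    have htendR : Tendsto (fun t : ℝ => B - A - (1 - t) * (1/2 * d^2)) (𝓝[>] 0)
        (𝓝 (B - A - 1/2 * d^2)) := by
      have : Tendsto (fun t : ℝ => B - A - (1 - t) * (1/2 * d^2)) (𝓝 0)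
          (𝓝 (B - A - (1 - 0) * (1/2 * d^2))) :=
        (continuous_const.sub ((continuous_const.sub continuous_id).mul continuous_const)).tendsto 0
      simpa using this.mono_left nhdsWithin_le_nhds
    refine le_of_tendsto_of_tendsto hslope htendR ?_
    filter_upwards [hIoo] with t ht
    have ht0 : (0:ℝ) < t := ht.1
    have h := hsc.2 (Set.mem_univ q₁) (Set.mem_univ q₂) (by linarith [ht.2] : (0:ℝ) ≤ 1 - t)
      ht.1.le (by ring : (1 - t) + t = 1)
    simp only [smul_eq_mul] at h
    have hz : (1 - t) • q₁ + t • q₂ = q₁ + t • v := by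
      rw [hv]; module
    rw [hz] at h
    have h2 := hq₁ (q₁ + t • v)
    rw [div_le_iff₀ ht0]
    nlinarith [h, h2]
  -- Combine
  have hcomb : d^2 ≤ g (q₁ - q₂) := by
    have : g (q₁ - q₂) = - g v := by rw [hv, ← map_neg]; congr 1; abel
    rw [this]
    nlinarith [stepA, stepB]
  have hop : g (q₁ - q₂) ≤ ‖g‖ * d := by
    calc g (q₁ - q₂) ≤ ‖g (q₁ - q₂)‖ := le_abs_self _
    _ ≤ ‖g‖ * ‖q₁ - q₂‖ := g.le_opNorm _
  have hsq : d * d ≤ ‖g‖ * d := by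
    have h := hcomb.trans hop
    rwa [pow_two] at h
  rcases eq_or_lt_of_le (norm_nonneg (q₁ - q₂)) with h0 | h0
  · have hd0 : d = 0 := h0.symm
    rw [hd0]; exact norm_nonneg g
  · exact le_of_mul_le_mul_right hsq h0
end
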